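/- Let V be a finite set of n ≥ 3 points with a metric d. Suppose a quantity R satisfies R = ∑_{triples {i,j,k}⊆V} triR(i,j,k) + 2·∑_{pairs {p,q}⊆V} d(p,q), where each triR(i,j,k) is a sum of two of the three pairwise distances of the triple. Then R > (1/2) · n · ∑_{pairs {p,q}⊆V} d(p,q), assuming ∑_{pairs} d(p,q) > 0. In particular, since the optimal value of the objective ∑_{pairs} d(p,q)·|leaves(T[p∨q])| is at most n·∑_{pairs} d(p,q), R is at least half the optimum. -/

import Mathlib

open Finset
open scoped Classical

/-- Any tree revenue of the CKMM form (triple revenues plus twice the total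
pairwise distance) exceeds half of `n` times the total pairwise distance, and
hence is at least half of the optimum `n·∑ d(p,q)`. -/
theorem ckmm_every_tree_half {X : Type*} (V : Finset X) (d : X → X → ℝ)
    (hnonneg : ∀ i j : X, 0 ≤ d i j)
    (hsymm : ∀ i j : X, d i j = d j i)
    (hself : ∀ i : X, d i i = 0)
    (htri : ∀ i j k : X, d i k ≤ d i j + d j k)
    (hn : 3 ≤ V.card)
    (triR : Finset X → ℝ)
    (hsel : ∀ t ∈ V.powersetCard 3, ∃ i j k : X,
      i ≠ j ∧ i ≠ k ∧ j ≠ k ∧ t = {i, j, k} ∧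
      (triR t = d i k + d j k ∨ triR t = d i j + d j k ∨ triR t = d i j + d i k))
    (R W : ℝ)
    (hW : W = (1 / 2) * ∑ p ∈ V, ∑ q ∈ V, d p q)
    (hWpos : 0 < W)
    (hR : R = (∑ t ∈ V.powersetCard 3, triR t) + 2 * W) :
    (1 / 2) * V.card * W < R := by
  classical
  set n := V.card with hn'
  have hWeq : (2:ℝ) * W = ∑ p ∈ V, ∑ q ∈ V, d p q := by rw [hW]; ring
  -- counting: each pair p ≠ q lies in at least n - 2 triples
  have hcount : ∀ p ∈ V, ∀ q ∈ V, p ≠ q →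
      (n - 2 : ℕ) ≤ ((V.powersetCard 3).filter (fun t => p ∈ t ∧ q ∈ t)).card := by
    intro p hp q hq hpq
    have hcard : ((V.erase p).erase q).card = n - 2 := by
      rw [Finset.card_erase_of_mem (Finset.mem_erase.mpr ⟨Ne.symm hpq, hq⟩),
        Finset.card_erase_of_mem hp]
      omega
    rw [← hcard]
    apply Finset.card_le_card_of_injOn (fun x => insert p (insert q {x}))
    · intro x hx
      have hxq : x ≠ q := (Finset.mem_erase.mp hx).1
      have hx' := (Finset.mem_erase.mp hx).2
      have hxp : x ≠ p := (Finset.mem_erase.mp hx').1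
      have hxV : x ∈ V := (Finset.mem_erase.mp hx').2
      simp only [Finset.mem_coe, Finset.mem_filter, Finset.mem_powersetCard]
      refine ⟨⟨?_, ?_⟩, ?_, ?_⟩
      · intro y hy
        simp only [Finset.mem_insert, Finset.mem_singleton] at hy
        rcases hy with rfl | rfl | rfl <;> assumption
      · rw [Finset.card_insert_of_notMem (by simp [hpq, hxp.symm]),
          Finset.card_insert_of_notMem (by simp [hxq.symm]), Finset.card_singleton]
      · simp
      · simp
    · intro x hx y hy hxy
      have hxq : x ≠ q := (Finset.mem_erase.mp hx).1
      have hxp : x ≠ p := (Finset.mem_erase.mp (Finset.mem_erase.mp hx).2).1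
      have hxy' : ({p, q, x} : Finset X) = {p, q, y} := hxy
      have : x ∈ insert p (insert q ({y} : Finset X)) := by
        rw [← hxy']; simp
      simp only [Finset.mem_insert, Finset.mem_singleton] at this
      rcases this with h | h | h
      · exact absurd h hxp
      · exact absurd h hxq
      · exact h
  -- each triple revenue is at least a quarter of the ordered double sum over the triple
  have hB : ∀ t ∈ V.powersetCard 3,
      (1/4) * (∑ p ∈ t, ∑ q ∈ t, d p q) ≤ triR t := by
    intro t ht
    obtain ⟨i, j, k, hij, hik, hjk, hteq, hcases⟩ := hsel t ht
    have hperim : ∑ p ∈ t, ∑ q ∈ t, d p q = 2 * (d i j + d i k + d j k) := by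
      subst hteq
      have e1 : ∀ f : X → ℝ, ∑ p ∈ ({i, j, k} : Finset X), f p = f i + (f j + f k) := by
        intro f
        rw [Finset.sum_insert (by simp [hij, hik]), Finset.sum_insert (by simp [hjk]),
          Finset.sum_singleton]
      simp only [e1]
      rw [hself i, hself j, hself k, hsymm j i, hsymm k i, hsymm k j]
      ring
    rw [hperim]
    have t1 := htri i k j
    have t2 := htri i j k
    have t3 := htri j i k
    have s1 := hsymm k j
    have s2 := hsymm j i
    rcases hcases with h | h | h <;> rw [h] <;> linarith
  -- swap sums
  have hswap : ∑ t ∈ V.powersetCard 3, ∑ p ∈ t, ∑ q ∈ t, d p q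
      = ∑ p ∈ V, ∑ q ∈ V,
        (((V.powersetCard 3).filter (fun t => p ∈ t ∧ q ∈ t)).card : ℝ) * d p q := by
    have h1 : ∀ t ∈ V.powersetCard 3, ∑ p ∈ t, ∑ q ∈ t, d p q
        = ∑ p ∈ V, ∑ q ∈ V, if p ∈ t ∧ q ∈ t then d p q else 0 := by
      intro t ht
      have hsub : t ⊆ V := (Finset.mem_powersetCard.mp ht).1
      calc ∑ p ∈ t, ∑ q ∈ t, d p q
          = ∑ p ∈ t, ∑ q ∈ V, if p ∈ t ∧ q ∈ t then d p q else 0 := by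
            refine Finset.sum_congr rfl fun p hp => ?_
            rw [← Finset.sum_subset hsub (fun q _ hqt => by simp [hqt])]
            exact Finset.sum_congr rfl fun q hq => by simp [hp, hq]
        _ = ∑ p ∈ V, ∑ q ∈ V, if p ∈ t ∧ q ∈ t then d p q else 0 := by
            refine Finset.sum_subset hsub fun p _ hpt => ?_
            exact Finset.sum_eq_zero fun q _ => by simp [hpt]
    rw [Finset.sum_congr rfl h1, Finset.sum_comm]
    refine Finset.sum_congr rfl fun p _ => ?_
    rw [Finset.sum_comm]
    refine Finset.sum_congr rfl fun q _ => ?_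
    rw [← Finset.sum_filter, Finset.sum_const, nsmul_eq_mul]
  -- the double sum over triples is at least (n-2) * 2W
  have hcast : ((n - 2 : ℕ) : ℝ) = (n : ℝ) - 2 := by
    rw [Nat.cast_sub (by omega)]; norm_num
  have hkey : ((n : ℝ) - 2) * (2 * W) ≤ ∑ t ∈ V.powersetCard 3, ∑ p ∈ t, ∑ q ∈ t, d p q := by
    rw [hswap, hWeq, Finset.mul_sum]
    refine Finset.sum_le_sum fun p hp => ?_
    rw [Finset.mul_sum]
    refine Finset.sum_le_sum fun q hq => ?_
    by_cases hpq : p = q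
    · subst hpq; rw [hself]; simp
    · apply mul_le_mul_of_nonneg_right _ (hnonneg p q)
      rw [← hcast]
      exact_mod_cast hcount p hp q hq hpq
  have hsum : ((n : ℝ) - 2) * (2 * W) * (1/4) ≤ ∑ t ∈ V.powersetCard 3, triR t := by
    calc ((n : ℝ) - 2) * (2 * W) * (1/4)
        ≤ (∑ t ∈ V.powersetCard 3, ∑ p ∈ t, ∑ q ∈ t, d p q) * (1/4) := by
          apply mul_le_mul_of_nonneg_right hkey; norm_num
      _ = ∑ t ∈ V.powersetCard 3, (1/4) * (∑ p ∈ t, ∑ q ∈ t, d p q) := by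
          rw [Finset.sum_mul]; exact Finset.sum_congr rfl fun t _ => by ring
      _ ≤ ∑ t ∈ V.powersetCard 3, triR t := Finset.sum_le_sum hB
  have : (0:ℝ) < W := hWpos
  rw [hR]
  nlinarith [hsum, hWpos]
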